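/- Suppose the Erdős pinned distance conjecture holds in $\mathbb{R}^d$: every finite $F \subseteq \mathbb{R}^d$ contains a point $x$ with $|\Delta_x(F)| \geq c|F|^{2/d}$. Then for any finite $E \subseteq \mathbb{R}^2$ (case $d = 2$) and any connected graph $G$ on $k+1$ vertices with $k + 1 \leq |E|/2$, the number of distinct $G$-distance vectors satisfies $|\Delta(G, E^{k+1})| \geq c' |E|^{k}$ for a constant $c'$ depending on $c$ and $k$. -/
import Mathlib

noncomputable instance : DecidableEq (EuclideanSpace ℝ (Fin 2)) := Classical.decEq _

abbrev PtPD := EuclideanSpace ℝ (Fin 2)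

def graphDistSet {k : ℕ} (G : SimpleGraph (Fin (k + 1)))
    (E : Finset (EuclideanSpace ℝ (Fin 2))) : Set (G.edgeSet → ℝ) :=
  {F | ∃ x : Fin (k + 1) → EuclideanSpace ℝ (Fin 2), (∀ j, x j ∈ E) ∧
    ∀ e : G.edgeSet,
      F e = Sym2.lift ⟨fun i j => dist (x i) (x j), fun _ _ => dist_comm _ _⟩ (e : Sym2 (Fin (k + 1))) }

/-- Rich pins: at least half the points of `A` have `≥ c|A|/2` pinned distances. -/
lemma richPinsPD (c : ℝ) (hc : 0 ≤ c)
    (pinned : ∀ F : Finset PtPD, F.Nonempty →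
      ∃ x ∈ F, c * (F.card : ℝ) ≤ ((F.image (fun y => dist x y)).card : ℝ))
    (A : Finset PtPD) :
    ∃ P ⊆ A, A.card ≤ 2 * P.card ∧
      ∀ x ∈ P, c * (A.card : ℝ) ≤ 2 * ((A.image (fun y => dist x y)).card : ℝ) := by
  have main : ∀ n (F : Finset PtPD), F.card ≤ n → F ⊆ A →
      ∃ P ⊆ F, 2 * F.card ≤ 2 * P.card + A.card ∧
        ∀ x ∈ P, c * (A.card : ℝ) ≤ 2 * ((A.image (fun y => dist x y)).card : ℝ) := by
    intro n
    induction n with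
    | zero =>
      intro F hF _
      refine ⟨∅, Finset.empty_subset _, ?_, by simp⟩
      omega
    | succ n ih =>
      intro F hF hFA
      by_cases hsmall : 2 * F.card ≤ A.card
      · exact ⟨∅, Finset.empty_subset _, by omega, by simp⟩
      · have hne : F.Nonempty := by
          rw [← Finset.card_pos]; omega
        obtain ⟨x, hxF, hx⟩ := pinned F hne
        obtain ⟨P, hPsub, hPcard, hPrich⟩ := ih (F.erase x)
          (by have := Finset.card_erase_of_mem hxF; omega)
          (Finset.Subset.trans (Finset.erase_subset _ _) hFA)
        have hxP : x ∉ P := fun h => (Finset.mem_erase.mp (hPsub h)).1 rfl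
        refine ⟨insert x P, ?_, ?_, ?_⟩
        · exact Finset.insert_subset hxF (hPsub.trans (Finset.erase_subset _ _))
        · rw [Finset.card_insert_of_notMem hxP]
          have := Finset.card_erase_of_mem hxF
          omega
        · intro y hy
          rcases Finset.mem_insert.mp hy with rfl | hyP
          · have h1 : c * (A.card : ℝ) ≤ 2 * (c * F.card) := by
              have : (A.card : ℝ) ≤ 2 * F.card := by
                have : A.card ≤ 2 * F.card := by omega
                exact_mod_cast this
              nlinarith
            have h2 : ((F.image (fun z => dist y z)).card : ℝ)
                ≤ ((A.image (fun z => dist y z)).card : ℝ) := by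
              exact_mod_cast Finset.card_le_card (Finset.image_subset_image hFA)
            linarith
          · exact hPrich y hyP
  obtain ⟨P, hPsub, hPcard, hPrich⟩ := main A.card A le_rfl Finset.Subset.rfl
  exact ⟨P, hPsub, by omega, hPrich⟩

/-- A connected graph on `Fin (k+1)` admits an ordering of its vertices where
every non-initial vertex is adjacent to an earlier one. -/
lemma exists_orderingPD {k : ℕ} (G : SimpleGraph (Fin (k + 1))) (hG : G.Connected) :
    ∃ σ : ℕ → Fin (k + 1),
      (∀ v, ∃ i, i ≤ k ∧ σ i = v) ∧
      (∀ i, i ≤ k → ∀ j, j ≤ k → σ i = σ j → i = j) ∧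
      (∀ i, 1 ≤ i → i ≤ k → ∃ j, j < i ∧ G.Adj (σ j) (σ i)) := by
  classical
  have claim : ∀ n (m : ℕ) (σ : ℕ → Fin (k + 1)), m + n = k →
      (∀ i, i ≤ m → ∀ j, j ≤ m → σ i = σ j → i = j) →
      (∀ i, 1 ≤ i → i ≤ m → ∃ j, j < i ∧ G.Adj (σ j) (σ i)) →
      ∃ σ' : ℕ → Fin (k + 1),
        (∀ i, i ≤ k → ∀ j, j ≤ k → σ' i = σ' j → i = j) ∧
        (∀ i, 1 ≤ i → i ≤ k → ∃ j, j < i ∧ G.Adj (σ' j) (σ' i)) := by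
    intro n
    induction n with
    | zero =>
      intro m σ hm hinj hadj
      have hmk : m = k := by omega
      subst hmk
      exact ⟨σ, hinj, hadj⟩
    | succ n ih =>
      intro m σ hm hinj hadj
      -- the image of {0,...,m} under σ is not everything
      set S : Finset (Fin (k + 1)) := (Finset.Iic m).image σ with hS
      have hScard : S.card ≤ m + 1 := by
        calc S.card ≤ (Finset.Iic m).card := Finset.card_image_le
        _ = m + 1 := by simp [Nat.card_Iic]
      have hexw : ∃ w : Fin (k + 1), w ∉ S := by
        by_contra h
        push_neg at h
        have : (Finset.univ : Finset (Fin (k + 1))).card ≤ S.card :=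
          Finset.card_le_card (fun w _ => h w)
        simp at this
        omega
      obtain ⟨w, hw⟩ := hexw
      have h0S : σ 0 ∈ (S : Set (Fin (k + 1))) := by
        simp only [hS, Finset.coe_image, Set.mem_image]
        exact ⟨0, by simp, rfl⟩
      have hwS : w ∉ (S : Set (Fin (k + 1))) := by simpa using hw
      obtain ⟨p⟩ := hG.preconnected (σ 0) w
      obtain ⟨d, _, hdS, hdS'⟩ := p.exists_boundary_dart (S : Set (Fin (k + 1))) h0S hwS
      obtain ⟨j₀, hj₀m, hj₀⟩ : ∃ j₀, j₀ ≤ m ∧ σ j₀ = d.fst := by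
        simp only [hS, Finset.coe_image, Set.mem_image] at hdS
        obtain ⟨j₀, hj₀, h⟩ := hdS
        exact ⟨j₀, by simpa using hj₀, h⟩
      set σ' := Function.update σ (m + 1) d.snd with hσ'
      have hσ'old : ∀ i, i ≤ m → σ' i = σ i := by
        intro i hi
        simp [hσ', Function.update_of_ne (by omega : i ≠ m + 1)]
      have hσ'new : σ' (m + 1) = d.snd := by simp [hσ']
      refine ih (m + 1) σ' (by omega) ?_ ?_
      · intro i hi j hj hij
        rcases Nat.lt_or_ge i (m + 1) with hi' | hi' <;>
          rcases Nat.lt_or_ge j (m + 1) with hj' | hj'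
        · exact hinj i (by omega) j (by omega)
            (by rwa [hσ'old i (by omega), hσ'old j (by omega)] at hij)
        · exfalso
          have hj'' : j = m + 1 := by omega
          rw [hσ'old i (by omega), hj'', hσ'new] at hij
          exact hdS' (by rw [← hij]; exact Finset.mem_coe.mpr (Finset.mem_image_of_mem σ (Finset.mem_Iic.mpr (by omega))))
        · exfalso
          have hi'' : i = m + 1 := by omega
          rw [hσ'old j (by omega), hi'', hσ'new] at hij
          exact hdS' (by rw [hij]; exact Finset.mem_coe.mpr (Finset.mem_image_of_mem σ (Finset.mem_Iic.mpr (by omega))))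
        · omega
      · intro i h1 hi
        rcases Nat.lt_or_ge i (m + 1) with hi' | hi'
        · obtain ⟨j, hj, hadj'⟩ := hadj i h1 (by omega)
          exact ⟨j, hj, by rwa [hσ'old j (by omega), hσ'old i (by omega)]⟩
        · have hi'' : i = m + 1 := by omega
          subst hi''
          refine ⟨j₀, by omega, ?_⟩
          rw [hσ'old j₀ hj₀m, hσ'new, hj₀]
          exact d.adj
  obtain ⟨σ', hinj, hadj⟩ := claim k 0 (fun _ => Classical.arbitrary _) (by omega)
    (by intro i hi j hj _; omega) (by intro i h1 h2; omega)
  refine ⟨σ', ?_, hinj, hadj⟩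
  -- surjectivity by counting
  have hcard : ((Finset.Iic k).image σ').card = k + 1 := by
    rw [Finset.card_image_of_injOn]
    · simp [Nat.card_Iic]
    · intro i hi j hj h
      exact hinj i (by simpa using hi) j (by simpa using hj) h
  have huniv : (Finset.Iic k).image σ' = Finset.univ := by
    apply Finset.eq_univ_of_card
    simpa using hcard
  intro v
  have : v ∈ (Finset.Iic k).image σ' := by rw [huniv]; exact Finset.mem_univ v
  obtain ⟨i, hi, h⟩ := Finset.mem_image.mp this
  exact ⟨i, by simpa using hi, h⟩

/-- Recursively build a tuple of points along the vertex ordering. -/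
noncomputable def buildPD {M : ℕ} (pick : PtPD → ℕ → Fin M → PtPD) (par : ℕ → ℕ)
    (x₀ : PtPD) (a : ℕ → Fin M) : ℕ → ℕ → PtPD
  | 0 => fun _ => x₀
  | (i + 1) => Function.update (buildPD pick par x₀ a i) (i + 1)
      (pick (buildPD pick par x₀ a i (par (i + 1))) (i + 1) (a i))

lemma buildPD_stable {M : ℕ} (pick : PtPD → ℕ → Fin M → PtPD) (par : ℕ → ℕ)
    (x₀ : PtPD) (a : ℕ → Fin M) :
    ∀ i j, j ≤ i → buildPD pick par x₀ a i j = buildPD pick par x₀ a j j := by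
  intro i
  induction i with
  | zero =>
    intro j hj
    have : j = 0 := by omega
    subst this; rfl
  | succ i ih =>
    intro j hj
    rcases Nat.lt_or_ge j (i + 1) with h | h
    · rw [buildPD, Function.update_of_ne (by omega : j ≠ i + 1)]
      exact ih j (by omega)
    · have : j = i + 1 := by omega
      subst this; rfl

lemma buildPD_congr {M : ℕ} (pick : PtPD → ℕ → Fin M → PtPD) (par : ℕ → ℕ)
    (x₀ : PtPD) (a a' : ℕ → Fin M) :
    ∀ i, (∀ m, m < i → a m = a' m) →
      buildPD pick par x₀ a i = buildPD pick par x₀ a' i := by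
  intro i
  induction i with
  | zero => intro _; rfl
  | succ i ih =>
    intro h
    have hi := ih (fun m hm => h m (by omega))
    rw [buildPD, buildPD, hi, h i (by omega)]

lemma buildPD_succ_self {M : ℕ} (pick : PtPD → ℕ → Fin M → PtPD) (par : ℕ → ℕ)
    (x₀ : PtPD) (a : ℕ → Fin M) (i : ℕ) :
    buildPD pick par x₀ a (i + 1) (i + 1) =
      pick (buildPD pick par x₀ a i (par (i + 1))) (i + 1) (a i) := by
  rw [buildPD, Function.update_self]

theorem graph_distances_of_pinned_conjecture (c : ℝ) (hc : 0 < c)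
    (pinned : ∀ F : Finset (EuclideanSpace ℝ (Fin 2)), F.Nonempty →
      ∃ x ∈ F, c * (F.card : ℝ) ^ ((2 : ℝ) / 2) ≤
        ((F.image (fun y => dist x y)).card : ℝ))
    (k : ℕ) :
    ∃ c' > (0 : ℝ), ∀ E : Finset (EuclideanSpace ℝ (Fin 2)),
      ∀ G : SimpleGraph (Fin (k + 1)), G.Connected → 2 * (k + 1) ≤ E.card →
        c' * (E.card : ℝ) ^ k ≤ ((graphDistSet G E).ncard : ℝ) := by
  classical
  have pinned' : ∀ F : Finset PtPD, F.Nonempty →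
      ∃ x ∈ F, c * (F.card : ℝ) ≤ ((F.image (fun y => dist x y)).card : ℝ) := by
    intro F hF
    obtain ⟨x, hx, h⟩ := pinned F hF
    refine ⟨x, hx, ?_⟩
    rwa [show ((2 : ℝ) / 2) = 1 by norm_num, Real.rpow_one] at h
  refine ⟨min ((c / 2 ^ k) ^ k) (1 / 2 ^ (k * k)), lt_min (by positivity) (by positivity), ?_⟩
  intro E G hG hEcard
  -- finiteness
  have hfin : (graphDistSet G E).Finite := by
    have hsub : graphDistSet G E ⊆ (fun x : Fin (k + 1) → PtPD =>
        (fun e : G.edgeSet =>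
          Sym2.lift ⟨fun i j => dist (x i) (x j), fun _ _ => dist_comm _ _⟩
            (e : Sym2 (Fin (k + 1))))) ''
        (Set.pi Set.univ fun _ : Fin (k + 1) => (E : Set PtPD)) := by
      rintro F ⟨x, hx, hF⟩
      exact ⟨x, fun j _ => hx j, (funext fun e => (hF e).symm)⟩
    exact Set.Finite.subset (Set.Finite.image _ (Set.Finite.pi fun _ => E.finite_toSet)) hsub
  have hE0 : 0 < E.card := by omega
  obtain ⟨p₀, hp₀⟩ : E.Nonempty := Finset.card_pos.mp hE0
  have hne : (graphDistSet G E).Nonempty :=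
    ⟨_, ⟨fun _ => p₀, fun _ => hp₀, fun e => rfl⟩⟩
  by_cases hbig : 2 ^ k ≤ E.card
  case neg =>
    have h1 : 1 ≤ (graphDistSet G E).ncard := (Set.ncard_pos hfin).mpr hne
    have hE2k : (E.card : ℝ) ≤ 2 ^ k := by
      have : E.card ≤ 2 ^ k := by omega
      exact_mod_cast this
    calc min ((c / 2 ^ k) ^ k) (1 / 2 ^ (k * k)) * (E.card : ℝ) ^ k
        ≤ (1 / 2 ^ (k * k)) * (E.card : ℝ) ^ k :=
          mul_le_mul_of_nonneg_right (min_le_right _ _) (by positivity)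
      _ ≤ (1 / 2 ^ (k * k)) * ((2 : ℝ) ^ k) ^ k := by
          apply mul_le_mul_of_nonneg_left (pow_le_pow_left₀ (by positivity) hE2k k)
            (by positivity)
      _ = 1 := by rw [← pow_mul]; field_simp
      _ ≤ ((graphDistSet G E).ncard : ℝ) := by exact_mod_cast h1
  case pos =>
  -- nested rich sets
  choose Pf hPsub hPcard hPrich using richPinsPD c hc.le pinned'
  obtain ⟨Q, hQ0, hQsucc⟩ : ∃ Q : ℕ → Finset PtPD, Q 0 = E ∧ ∀ j, Q (j + 1) = Pf (Q j) :=
    ⟨fun j => Nat.rec E (fun _ Qj => Pf Qj) j, rfl, fun _ => rfl⟩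
  have hQmono : ∀ m n, m ≤ n → Q n ⊆ Q m := by
    intro m n hmn
    induction n with
    | zero =>
      have hm0 : m = 0 := by omega
      subst hm0; exact Finset.Subset.rfl
    | succ n ih =>
      rcases Nat.lt_or_ge m (n + 1) with h | h
      · exact Finset.Subset.trans (hQsucc n ▸ hPsub (Q n)) (ih (by omega))
      · have : m = n + 1 := by omega
        subst this; exact Finset.Subset.rfl
  have hQE : ∀ j, Q j ⊆ E := fun j => hQ0 ▸ hQmono 0 j (Nat.zero_le _)
  have hQcard : ∀ j, E.card ≤ 2 ^ j * (Q j).card := by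
    intro j
    induction j with
    | zero => simpa using hQ0 ▸ le_rfl
    | succ j ih =>
      have h2 : (Q j).card ≤ 2 * (Q (j + 1)).card := by
        rw [hQsucc j]; exact hPcard (Q j)
      calc E.card ≤ 2 ^ j * (Q j).card := ih
        _ ≤ 2 ^ j * (2 * (Q (j + 1)).card) := Nat.mul_le_mul_left _ h2
        _ = 2 ^ (j + 1) * (Q (j + 1)).card := by ring
  set M : ℕ := ⌈c * E.card / 2 ^ k⌉₊ with hMdef
  have hMpos : 0 < M := Nat.ceil_pos.mpr (by positivity)
  have hMle : ∀ j, j + 1 ≤ k → ∀ x ∈ Q (j + 1),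
      M ≤ ((Q j).image (fun y => dist x y)).card := by
    intro j hj x hx
    rw [hMdef, Nat.ceil_le]
    have h1 : c * ((Q j).card : ℝ) ≤ 2 * (((Q j).image (fun y => dist x y)).card : ℝ) :=
      hPrich (Q j) x (by rwa [hQsucc j] at hx)
    have h2 : (E.card : ℝ) ≤ 2 ^ j * ((Q j).card : ℝ) := by
      have := hQcard j; exact_mod_cast this
    have h3 : (2 : ℝ) ^ (j + 1) ≤ 2 ^ k := by
      apply pow_le_pow_right₀ (by norm_num) hj
    have hcard0 : (0 : ℝ) ≤ (((Q j).image (fun y => dist x y)).card : ℝ) := by positivity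
    rw [div_le_iff₀ (by positivity : (0 : ℝ) < 2 ^ k)]
    calc c * (E.card : ℝ) ≤ c * ((2 : ℝ) ^ j * ((Q j).card : ℝ)) :=
          mul_le_mul_of_nonneg_left h2 hc.le
      _ = (2 : ℝ) ^ j * (c * ((Q j).card : ℝ)) := by ring
      _ ≤ (2 : ℝ) ^ j * (2 * (((Q j).image (fun y => dist x y)).card : ℝ)) :=
          mul_le_mul_of_nonneg_left h1 (by positivity)
      _ = (((Q j).image (fun y => dist x y)).card : ℝ) * 2 ^ (j + 1) := by ring
      _ ≤ (((Q j).image (fun y => dist x y)).card : ℝ) * 2 ^ k :=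
          mul_le_mul_of_nonneg_left h3 hcard0
  -- ordering of vertices
  obtain ⟨σ, hσsurj, hσinj, hσadj⟩ := exists_orderingPD G hG
  choose σinv hσinv1 hσinv2 using hσsurj
  have hadj' : ∀ i : ℕ, ∃ j : ℕ, 1 ≤ i → i ≤ k → j < i ∧ G.Adj (σ j) (σ i) := by
    intro i
    by_cases h : 1 ≤ i ∧ i ≤ k
    · obtain ⟨j, hj⟩ := hσadj i h.1 h.2
      exact ⟨j, fun _ _ => hj⟩
    · exact ⟨0, fun h1 h2 => absurd ⟨h1, h2⟩ h⟩
  choose par hpar using hadj'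
  -- pick function
  have hpick' : ∀ (x : PtPD) (i : ℕ), ∃ y : Fin M → PtPD,
      1 ≤ i → i ≤ k → x ∈ Q (k - par i) →
        (∀ s, y s ∈ Q (k - par i - 1)) ∧
        ∀ s t : Fin M, dist x (y s) = dist x (y t) → s = t := by
    intro x i
    by_cases h : 1 ≤ i ∧ i ≤ k ∧ x ∈ Q (k - par i)
    · obtain ⟨h1, h2, h3⟩ := h
      have hpi : par i < i := (hpar i h1 h2).1
      have hm1 : k - par i = (k - par i - 1) + 1 := by omega
      have hx' : x ∈ Q ((k - par i - 1) + 1) := hm1 ▸ h3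
      have hMle' : M ≤ ((Q (k - par i - 1)).image (fun y => dist x y)).card :=
        hMle (k - par i - 1) (by omega) x hx'
      obtain ⟨T, hTsub, hTcard⟩ := Finset.exists_subset_card_eq hMle'
      have hmem : ∀ s : Fin M,
          T.orderEmbOfFin hTcard s ∈ (Q (k - par i - 1)).image (fun y => dist x y) :=
        fun s => hTsub (T.orderEmbOfFin_mem hTcard s)
      have hex : ∀ s : Fin M, ∃ y, y ∈ Q (k - par i - 1) ∧
          dist x y = T.orderEmbOfFin hTcard s := by
        intro s
        obtain ⟨y, hy, h⟩ := Finset.mem_image.mp (hmem s)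
        exact ⟨y, hy, h⟩
      choose y hy1 hy2 using hex
      refine ⟨y, fun _ _ _ => ⟨hy1, fun s t hst => ?_⟩⟩
      rw [hy2 s, hy2 t] at hst
      exact (T.orderEmbOfFin hTcard).injective hst
    · exact ⟨fun _ => x, fun h1 h2 h3 => absurd ⟨h1, h2, h3⟩ h⟩
  choose pick hpick using hpick'
  -- the root point
  have hQkne : (Q k).Nonempty := by
    rw [← Finset.card_pos]
    by_contra h
    push_neg at h
    have h0 : (Q k).card = 0 := by omega
    have h1 := hQcard k
    rw [h0, Nat.mul_zero] at h1
    omega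
  obtain ⟨x₀, hx₀⟩ := hQkne
  -- membership invariant of the built tuples
  have hbuild_mem : ∀ a : ℕ → Fin M, ∀ i, i ≤ k → ∀ j, j ≤ i →
      buildPD pick par x₀ a i j ∈ Q (k - j) := by
    intro a i
    induction i with
    | zero =>
      intro _ j hj
      have hj0 : j = 0 := by omega
      subst hj0
      simpa [buildPD] using hx₀
    | succ i ih =>
      intro hik j hj
      rcases Nat.lt_or_ge j (i + 1) with h | h
      · have heq : buildPD pick par x₀ a (i + 1) j = buildPD pick par x₀ a i j := by
          rw [buildPD_stable pick par x₀ a (i + 1) j (by omega),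
            buildPD_stable pick par x₀ a i j (by omega)]
        rw [heq]
        exact ih (by omega) j (by omega)
      · have hji : j = i + 1 := by omega
        subst hji
        rw [buildPD_succ_self]
        have h1 : 1 ≤ i + 1 := by omega
        have hpi : par (i + 1) < i + 1 := (hpar (i + 1) h1 hik).1
        have hXmem : buildPD pick par x₀ a i (par (i + 1)) ∈ Q (k - par (i + 1)) :=
          ih (by omega) (par (i + 1)) (by omega)
        have hmem := (hpick _ (i + 1) h1 hik hXmem).1 (a i)
        exact hQmono _ _ (by omega) hmem
  -- the tuples and their distance vectors
  obtain ⟨xx, hxxdef⟩ : ∃ xx : (ℕ → Fin M) → Fin (k + 1) → PtPD,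
      ∀ a v, xx a v = buildPD pick par x₀ a k (σinv v) :=
    ⟨_, fun a v => rfl⟩
  obtain ⟨Φ, hΦdef⟩ : ∃ Φ : (ℕ → Fin M) → G.edgeSet → ℝ,
      ∀ a e, Φ a e = Sym2.lift ⟨fun i j => dist (xx a i) (xx a j), fun _ _ => dist_comm _ _⟩
        (e : Sym2 (Fin (k + 1))) :=
    ⟨_, fun a e => rfl⟩
  have hΦmem : ∀ a, Φ a ∈ graphDistSet G E := by
    intro a
    refine ⟨xx a, fun v => ?_, fun e => hΦdef a e⟩
    rw [hxxdef]
    exact hQE _ (hbuild_mem a k le_rfl (σinv v) (hσinv1 v))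
  have hσli : ∀ j, j ≤ k → σinv (σ j) = j :=
    fun j hj => hσinj _ (hσinv1 _) j hj (hσinv2 (σ j))
  -- reduction of the vector entries on tree edges
  have hval : ∀ a : ℕ → Fin M, ∀ i, i < k →
      ∀ he : s(σ (par (i + 1)), σ (i + 1)) ∈ G.edgeSet,
        Φ a ⟨s(σ (par (i + 1)), σ (i + 1)), he⟩ =
          dist (buildPD pick par x₀ a i (par (i + 1)))
            (pick (buildPD pick par x₀ a i (par (i + 1))) (i + 1) (a i)) := by
    intro a i hik he
    have hpi : par (i + 1) < i + 1 := (hpar (i + 1) (by omega) (by omega)).1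
    have h1 : Φ a ⟨s(σ (par (i + 1)), σ (i + 1)), he⟩ =
        dist (xx a (σ (par (i + 1)))) (xx a (σ (i + 1))) := by
      rw [hΦdef]
      rfl
    rw [h1, hxxdef, hxxdef, hσli (par (i + 1)) (by omega), hσli (i + 1) (by omega)]
    congr 1
    · rw [buildPD_stable pick par x₀ a k (par (i + 1)) (by omega),
        ← buildPD_stable pick par x₀ a i (par (i + 1)) (by omega)]
    · rw [buildPD_stable pick par x₀ a k (i + 1) (by omega), buildPD_succ_self]
  -- key injectivity
  have hkey : ∀ a a' : ℕ → Fin M, Φ a = Φ a' → ∀ i, i < k → a i = a' i := by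
    intro a a' hΦeq i
    induction i using Nat.strong_induction_on with
    | _ i ih =>
      intro hik
      have hcongr : buildPD pick par x₀ a i = buildPD pick par x₀ a' i :=
        buildPD_congr pick par x₀ a a' i (fun m hm => ih m hm (by omega))
      have hadj : G.Adj (σ (par (i + 1))) (σ (i + 1)) :=
        (hpar (i + 1) (by omega) (by omega)).2
      have he : s(σ (par (i + 1)), σ (i + 1)) ∈ G.edgeSet := hadj
      have hv1 := hval a i hik he
      have hv2 := hval a' i hik he
      rw [← hcongr] at hv2
      have heq : dist (buildPD pick par x₀ a i (par (i + 1)))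
            (pick (buildPD pick par x₀ a i (par (i + 1))) (i + 1) (a i)) =
          dist (buildPD pick par x₀ a i (par (i + 1)))
            (pick (buildPD pick par x₀ a i (par (i + 1))) (i + 1) (a' i)) := by
        rw [← hv1, ← hv2, hΦeq]
      have hpi : par (i + 1) < i + 1 := (hpar (i + 1) (by omega) (by omega)).1
      have hXmem : buildPD pick par x₀ a i (par (i + 1)) ∈ Q (k - par (i + 1)) := by
        rw [buildPD_stable pick par x₀ a i (par (i + 1)) (by omega)]
        exact hbuild_mem a (par (i + 1)) (by omega) (par (i + 1)) le_rfl
      exact (hpick _ (i + 1) (by omega) (by omega) hXmem).2 (a i) (a' i) heq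
  -- final injection from (Fin k → Fin M)
  obtain ⟨ext, hextdef⟩ : ∃ ext : (Fin k → Fin M) → ℕ → Fin M,
      ∀ b n, ext b n = if h : n < k then b ⟨n, h⟩ else ⟨0, hMpos⟩ :=
    ⟨_, fun b n => rfl⟩
  have hFinj : Function.Injective (fun b : Fin k → Fin M => Φ (ext b)) := by
    intro b b' h
    funext s
    have h2 := hkey (ext b) (ext b') h s.val s.isLt
    rw [hextdef, hextdef, dif_pos s.isLt, dif_pos s.isLt] at h2
    simpa using h2
  have hcount : M ^ k ≤ (graphDistSet G E).ncard := by
    have hrange : Set.range (fun b : Fin k → Fin M => Φ (ext b)) ⊆ graphDistSet G E := by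
      rintro _ ⟨b, rfl⟩
      exact hΦmem _
    have h1 : (Set.range (fun b : Fin k → Fin M => Φ (ext b))).ncard = M ^ k := by
      rw [← Nat.card_coe_set_eq, Nat.card_range_of_injective hFinj]
      simp [Nat.card_eq_fintype_card]
    calc M ^ k = _ := h1.symm
      _ ≤ _ := Set.ncard_le_ncard hrange hfin
  -- numeric conclusion
  calc min ((c / 2 ^ k) ^ k) (1 / 2 ^ (k * k)) * (E.card : ℝ) ^ k
      ≤ (c / 2 ^ k) ^ k * (E.card : ℝ) ^ k :=
        mul_le_mul_of_nonneg_right (min_le_left _ _) (by positivity)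
    _ = (c * E.card / 2 ^ k) ^ k := by rw [← mul_pow]; ring_nf
    _ ≤ (M : ℝ) ^ k := pow_le_pow_left₀ (by positivity) (Nat.le_ceil _) k
    _ = ((M ^ k : ℕ) : ℝ) := by push_cast; ring
    _ ≤ ((graphDistSet G E).ncard : ℝ) := by exact_mod_cast hcount
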